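/- Every EM-G-graded commutative ring is Armendariz-G-graded: if f(x) = Σ a_i x^i and g(x) = Σ b_j x^j are homogeneous polynomials in R[x] with f·g = 0, then a_i·b_j = 0 for all i, j. -/

import Mathlib

open Polynomial

/-- `R` (with grading `𝒜`) is an EM-`G`-graded ring. -/
def IsEMGGraded {G R : Type*} [CommRing R] (𝒜 : G → AddSubgroup R) : Prop :=
  ∀ f : R[X], f ≠ 0 → (∃ σ : G, ∀ i, f.coeff i ∈ 𝒜 σ) → f ∉ nonZeroDivisors R[X] →
    ∃ (c : R) (g : R[X]), c ∉ nonZeroDivisors R ∧ g ∈ nonZeroDivisors R[X] ∧ f = C c * g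

/-- Every EM-`G`-graded ring is Armendariz-`G`-graded: if `f, g` are
homogeneous polynomials with `f·g = 0`, then all products of their coefficients vanish. -/
theorem stmt_12 {G R : Type*} [AddGroup G] [DecidableEq G] [CommRing R]
    (𝒜 : G → AddSubgroup R) [GradedRing 𝒜] (hEM : IsEMGGraded 𝒜)
    (f g : R[X]) (hf : ∃ σ : G, ∀ i, f.coeff i ∈ 𝒜 σ)
    (hg : ∃ σ : G, ∀ i, g.coeff i ∈ 𝒜 σ)
    (hfg : f * g = 0) :
    ∀ i j, f.coeff i * g.coeff j = 0 := by
  intro i j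
  by_cases hf0 : f = 0
  · simp [hf0]
  by_cases hg0 : g = 0
  · simp [hg0]
  have hfnzd : f ∉ nonZeroDivisors R[X] := fun h =>
    hg0 (h.2 g (by rw [mul_comm]; exact hfg))
  obtain ⟨c, g', hc, hg', hfe⟩ := hEM f hf0 hf hfnzd
  have h1 : C c * g = 0 := by
    apply hg'.2
    have : f * g = C c * g * g' := by rw [hfe]; ring
    rw [← this, hfg]
  have hcg : c * g.coeff j = 0 := by
    have := congrArg (fun p => Polynomial.coeff p j) h1
    simpa using this
  have hfi : f.coeff i = c * g'.coeff i := by rw [hfe]; simp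
  rw [hfi]
  calc c * g'.coeff i * g.coeff j = g'.coeff i * (c * g.coeff j) := by ring
    _ = 0 := by rw [hcg, mul_zero]
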